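/- Let R_{-1}, R_0 ∈ L(K,H) be a basic solution for the linear pencil A(z) = A_0 + A_1 z on the annulus U_{s,r}, i.e., R_{-1}A_1 + R_0A_0 = I, A_1R_{-1} + A_0R_0 = I, R_{-1}A_iR_0 = R_0A_iR_{-1} = 0 for i = 0,1, with the spectral radius bounds. Then for z ∈ U_{s,r}, with P = R_{-1}A_1 and Q = A_1R_{-1}, the closed form satisfies P R(z) Q = (Iz + R_{-1}A_0)^{-1}R_{-1} and (I-P) R(z) (I-Q) = (I + R_0A_1 z)^{-1}R_0, where R(z) = A(z)^{-1}. -/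

import Mathlib

open Filter

lemma aux_spectralRadius_le {A : Type*} [NormedRing A] [NormedAlgebra ℂ A] [CompleteSpace A]
    (a : A) {s t : ℝ} (h : limsup (fun j : ℕ => ‖a ^ j‖ ^ ((j : ℝ)⁻¹)) atTop ≤ s)
    (hst : s < t) : spectralRadius ℂ a ≤ ENNReal.ofReal t := by
  have hbdd : IsBoundedUnder (· ≤ ·) atTop (fun j : ℕ => ‖a ^ j‖ ^ ((j : ℝ)⁻¹)) := by
    refine Filter.isBoundedUnder_of ⟨max ‖a‖ 1, fun j => ?_⟩
    rcases Nat.eq_zero_or_pos j with hj | hj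
    · simp [hj]
    · have hj0 : (j : ℝ) ≠ 0 := Nat.cast_ne_zero.mpr hj.ne'
      have h1 : ‖a ^ j‖ ^ ((j : ℝ)⁻¹) ≤ (‖a‖ ^ j) ^ ((j : ℝ)⁻¹) :=
        Real.rpow_le_rpow (norm_nonneg _) (norm_pow_le' a hj) (by positivity)
      have h2 : (‖a‖ ^ j) ^ ((j : ℝ)⁻¹) = ‖a‖ := by
        rw [← Real.rpow_natCast ‖a‖ j, ← Real.rpow_mul (norm_nonneg _),
          mul_inv_cancel₀ hj0, Real.rpow_one]
      exact le_max_iff.mpr (Or.inl (h1.trans_eq h2))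
  have hev : ∀ᶠ j : ℕ in atTop, ‖a ^ j‖ ^ ((j : ℝ)⁻¹) < t :=
    eventually_lt_of_limsup_lt (lt_of_le_of_lt h hst) hbdd
  refine le_of_tendsto (spectrum.pow_norm_pow_one_div_tendsto_nhds_spectralRadius a) ?_
  refine hev.mono fun j hj => ?_
  rw [one_div]
  exact ENNReal.ofReal_le_ofReal hj.le

lemma aux_neg_pow_norm {A : Type*} [NormedRing A] (a : A) (n : ℕ) :
    ‖(-a) ^ n‖ = ‖a ^ n‖ := by
  rcases Nat.even_or_odd n with h | h
  · rw [h.neg_pow]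
  · rw [h.neg_pow, norm_neg]

lemma aux_comp_cancel {H K : Type*} [NormedAddCommGroup H] [NormedSpace ℂ H]
    [NormedAddCommGroup K] [NormedSpace ℂ K]
    {u B : H →L[ℂ] H} (hBu : B * u = 1) {X Y : K →L[ℂ] H}
    (h : u.comp X = u.comp Y) : X = Y := by
  have h2 := congrArg B.comp h
  rw [← ContinuousLinearMap.comp_assoc B u X, ← ContinuousLinearMap.comp_assoc B u Y,
    ← ContinuousLinearMap.mul_def, hBu, ContinuousLinearMap.one_def,
    ContinuousLinearMap.id_comp, ContinuousLinearMap.id_comp] at h2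
  exact h2

/-- for a basic solution `{R₋₁, R₀}` on the annulus `U_{s,r}`, with
`P = R₋₁A₁`, `Q = A₁R₋₁` and `R(z)` the resolvent, the closed form holds:
`P R(z) Q = (Iz + R₋₁A₀)⁻¹ R₋₁` and `(I-P) R(z) (I-Q) = (I + R₀A₁z)⁻¹ R₀`. -/
theorem resolvent_closed_form
    {H K : Type*} [NormedAddCommGroup H] [NormedSpace ℂ H] [CompleteSpace H]
    [NormedAddCommGroup K] [NormedSpace ℂ K] [CompleteSpace K]
    (s r : ℝ) (hs : 0 ≤ s) (hsr : s < r)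
    (A₀ A₁ : H →L[ℂ] K) (Rm1 R0 : K →L[ℂ] H)
    (h1 : Rm1.comp A₁ + R0.comp A₀ = 1)
    (h1' : A₁.comp Rm1 + A₀.comp R0 = 1)
    (h2 : ∀ Ai ∈ ({A₀, A₁} : Set (H →L[ℂ] K)),
      (Rm1.comp Ai).comp R0 = 0 ∧ (R0.comp Ai).comp Rm1 = 0)
    (h3 : limsup (fun j : ℕ => ‖(Rm1.comp A₀) ^ j‖ ^ ((j : ℝ)⁻¹)) atTop ≤ s)
    (h3' : limsup (fun j : ℕ => ‖(R0.comp A₁) ^ j‖ ^ ((j : ℝ)⁻¹)) atTop ≤ 1 / r)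
    (Res : ℂ → (K →L[ℂ] H))
    (hRes : ∀ z : ℂ, s < ‖z‖ → ‖z‖ < r →
      (Res z).comp (A₀ + z • A₁) = 1 ∧ (A₀ + z • A₁).comp (Res z) = 1) :
    ∀ z : ℂ, s < ‖z‖ → ‖z‖ < r →
      ∃ B C : H →L[ℂ] H,
        B * (z • 1 + Rm1.comp A₀) = 1 ∧ (z • 1 + Rm1.comp A₀) * B = 1 ∧
        C * (1 + z • (R0.comp A₁)) = 1 ∧ (1 + z • (R0.comp A₁)) * C = 1 ∧
        ((Rm1.comp A₁).comp (Res z)).comp (A₁.comp Rm1) = B.comp Rm1 ∧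
        ((1 - Rm1.comp A₁).comp (Res z)).comp (1 - A₁.comp Rm1) = C.comp R0 := by
  have hr : 0 < r := lt_of_le_of_lt hs hsr
  intro z hz1 hz2
  have hz0 : z ≠ 0 := by
    intro h; rw [h, norm_zero] at hz1; exact absurd hz1 (not_lt.mpr hs)
  have hznorm : 0 < ‖z‖ := lt_of_le_of_lt hs hz1
  -- invertibility of z•1 + Rm1∘A₀
  have hspecN : spectralRadius ℂ (-(Rm1.comp A₀)) ≤ ENNReal.ofReal ((s + ‖z‖) / 2) := by
    refine aux_spectralRadius_le (s := s) (-(Rm1.comp A₀)) ?_ ?_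
    · simpa only [aux_neg_pow_norm] using h3
    · linarith
  have hUnit1 : IsUnit (z • (1 : H →L[ℂ] H) + (Rm1.comp A₀)) := by
    have hz : z ∈ resolventSet ℂ (-(Rm1.comp A₀)) := by
      refine spectrum.mem_resolventSet_of_spectralRadius_lt (lt_of_le_of_lt hspecN ?_)
      rw [← ENNReal.ofReal_coe_nnreal, coe_nnnorm]
      exact ENNReal.ofReal_lt_ofReal_iff hznorm |>.mpr (by linarith)
    rw [spectrum.mem_resolventSet_iff, sub_neg_eq_add, Algebra.algebraMap_eq_smul_one] at hz
    exact hz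
  -- invertibility of 1 + z•(R0.comp A₁)
  have hspecM : spectralRadius ℂ (-(R0.comp A₁)) ≤ ENNReal.ofReal ((1 / r + 1 / ‖z‖) / 2) := by
    refine aux_spectralRadius_le (s := 1 / r) (-(R0.comp A₁)) ?_ ?_
    · simpa only [aux_neg_pow_norm] using h3'
    · have : 1 / r < 1 / ‖z‖ := by
        apply one_div_lt_one_div_of_lt hznorm hz2
      linarith
  have hUnit2 : IsUnit ((1 : H →L[ℂ] H) + z • (R0.comp A₁)) := by
    have hz : z⁻¹ ∈ resolventSet ℂ (-(R0.comp A₁)) := by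
      refine spectrum.mem_resolventSet_of_spectralRadius_lt (lt_of_le_of_lt hspecM ?_)
      rw [← ENNReal.ofReal_coe_nnreal, coe_nnnorm, norm_inv]
      have h1r : 1 / r < 1 / ‖z‖ := one_div_lt_one_div_of_lt hznorm hz2
      have : (1 / r + 1 / ‖z‖) / 2 < ‖z‖⁻¹ := by
        rw [← one_div]; linarith
      exact ENNReal.ofReal_lt_ofReal_iff (by positivity) |>.mpr this
    rw [spectrum.mem_resolventSet_iff, sub_neg_eq_add, Algebra.algebraMap_eq_smul_one] at hz
    have hkey : z • (z⁻¹ • (1 : H →L[ℂ] H) + (R0.comp A₁)) = 1 + z • (R0.comp A₁) := by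
      rw [smul_add, smul_smul, mul_inv_cancel₀ hz0, one_smul]
    have : IsUnit (z • (z⁻¹ • (1 : H →L[ℂ] H) + (R0.comp A₁))) := by
      rw [Algebra.smul_def]
      exact ((isUnit_iff_ne_zero.mpr hz0).map (algebraMap ℂ (H →L[ℂ] H))).mul hz
    rwa [hkey] at this
  -- the inverses
  refine ⟨↑hUnit1.unit⁻¹, ↑hUnit2.unit⁻¹, ?_, ?_, ?_, ?_, ?_, ?_⟩
  · exact hUnit1.unit.inv_mul
  · exact hUnit1.unit.mul_inv
  · exact hUnit2.unit.inv_mul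
  · exact hUnit2.unit.mul_inv
  · -- P R(z) Q = B ∘ Rm1
    have hA0R0 : (Rm1.comp A₀).comp R0 = 0 := (h2 A₀ (by simp)).1
    have hA1Rm : (R0.comp A₁).comp Rm1 = 0 := (h2 A₁ (by simp)).2
    have hP : Rm1.comp A₁ = 1 - R0.comp A₀ := eq_sub_of_add_eq h1
    have hQ : A₁.comp Rm1 = 1 - A₀.comp R0 := eq_sub_of_add_eq h1'
    have stepa : (Rm1.comp A₀).comp (Rm1.comp A₁) = (Rm1.comp A₀) := by
      rw [hP, ContinuousLinearMap.comp_sub, ← ContinuousLinearMap.comp_assoc, hA0R0,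
        ContinuousLinearMap.zero_comp, sub_zero]
      exact ContinuousLinearMap.comp_id _
    have stepb : Rm1.comp (A₁.comp Rm1) = Rm1 := by
      rw [hQ, ContinuousLinearMap.comp_sub, ← ContinuousLinearMap.comp_assoc, hA0R0, sub_zero]
      exact ContinuousLinearMap.comp_id _
    have hleft : (z • (1 : H →L[ℂ] H) + (Rm1.comp A₀)).comp (Rm1.comp A₁) = Rm1.comp (A₀ + z • A₁) := by
      rw [ContinuousLinearMap.add_comp, ContinuousLinearMap.smul_comp, stepa,
        ContinuousLinearMap.comp_add, ContinuousLinearMap.comp_smul]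
      rw [show ((1 : H →L[ℂ] H).comp (Rm1.comp A₁)) = Rm1.comp A₁ from
        ContinuousLinearMap.id_comp _]
      rw [add_comm]
    have E1 : (z • (1 : H →L[ℂ] H) + (Rm1.comp A₀)).comp
        (((Rm1.comp A₁).comp (Res z)).comp (A₁.comp Rm1)) = Rm1 := by
      rw [← ContinuousLinearMap.comp_assoc (z • (1 : H →L[ℂ] H) + Rm1.comp A₀)
          ((Rm1.comp A₁).comp (Res z)) (A₁.comp Rm1),
        ← ContinuousLinearMap.comp_assoc (z • (1 : H →L[ℂ] H) + Rm1.comp A₀)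
          (Rm1.comp A₁) (Res z), hleft,
        ContinuousLinearMap.comp_assoc Rm1 (A₀ + z • A₁) (Res z), (hRes z hz1 hz2).2]
      rw [show (Rm1.comp (1 : K →L[ℂ] K)) = Rm1 from ContinuousLinearMap.comp_id _]
      exact stepb
    have E1' : (z • (1 : H →L[ℂ] H) + (Rm1.comp A₀)).comp ((↑hUnit1.unit⁻¹ : H →L[ℂ] H).comp Rm1) = Rm1 := by
      rw [← ContinuousLinearMap.comp_assoc, ← ContinuousLinearMap.mul_def,
        show ((z • (1 : H →L[ℂ] H) + Rm1.comp A₀) * ↑hUnit1.unit⁻¹) = 1 from hUnit1.unit.mul_inv, ContinuousLinearMap.one_def,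
        ContinuousLinearMap.id_comp]
    exact aux_comp_cancel hUnit1.unit.inv_mul (E1.trans E1'.symm)
  · -- (1-P) R(z) (1-Q) = C ∘ R0
    have hA0R0 : (Rm1.comp A₀).comp R0 = 0 := (h2 A₀ (by simp)).1
    have hA1Rm : (R0.comp A₁).comp Rm1 = 0 := (h2 A₁ (by simp)).2
    have hP : (1 : H →L[ℂ] H) - Rm1.comp A₁ = R0.comp A₀ := by
      rw [← h1]; abel
    have hQ : (1 : K →L[ℂ] K) - A₁.comp Rm1 = A₀.comp R0 := by
      rw [← h1']; abel
    have stepa : (R0.comp A₁).comp (R0.comp A₀) = (R0.comp A₁).comp (R0.comp A₀) := rfl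
    have stepc : (R0.comp A₁).comp ((1 : H →L[ℂ] H) - Rm1.comp A₁) = (R0.comp A₁) := by
      rw [ContinuousLinearMap.comp_sub, ← ContinuousLinearMap.comp_assoc, hA1Rm,
        ContinuousLinearMap.zero_comp, sub_zero]
      exact ContinuousLinearMap.comp_id _
    have hleft : ((1 : H →L[ℂ] H) + z • (R0.comp A₁)).comp ((1 : H →L[ℂ] H) - Rm1.comp A₁)
        = R0.comp (A₀ + z • A₁) := by
      rw [ContinuousLinearMap.add_comp, ContinuousLinearMap.smul_comp, stepc,
        show ((1 : H →L[ℂ] H).comp ((1 : H →L[ℂ] H) - Rm1.comp A₁))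
          = (1 : H →L[ℂ] H) - Rm1.comp A₁ from ContinuousLinearMap.id_comp _,
        hP, ContinuousLinearMap.comp_add, ContinuousLinearMap.comp_smul]
    have stepb : R0.comp ((1 : K →L[ℂ] K) - A₁.comp Rm1) = R0 := by
      rw [hQ, ← ContinuousLinearMap.comp_assoc]
      have hR0A0R0 : (R0.comp A₀).comp R0 = R0 := by
        have : R0.comp ((1 : K →L[ℂ] K)) = R0 := ContinuousLinearMap.comp_id _
        rw [← h1', ContinuousLinearMap.comp_add, ← ContinuousLinearMap.comp_assoc,
          ← ContinuousLinearMap.comp_assoc, hA1Rm] at this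
        simpa using this
      exact hR0A0R0
    have E2 : ((1 : H →L[ℂ] H) + z • (R0.comp A₁)).comp
        (((1 - Rm1.comp A₁).comp (Res z)).comp (1 - A₁.comp Rm1)) = R0 := by
      rw [← ContinuousLinearMap.comp_assoc ((1 : H →L[ℂ] H) + z • (R0.comp A₁))
          ((1 - Rm1.comp A₁).comp (Res z)) (1 - A₁.comp Rm1),
        ← ContinuousLinearMap.comp_assoc ((1 : H →L[ℂ] H) + z • (R0.comp A₁))
          (1 - Rm1.comp A₁) (Res z), hleft,
        ContinuousLinearMap.comp_assoc R0 (A₀ + z • A₁) (Res z), (hRes z hz1 hz2).2]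
      rw [show (R0.comp (1 : K →L[ℂ] K)) = R0 from ContinuousLinearMap.comp_id _]
      exact stepb
    have E2' : ((1 : H →L[ℂ] H) + z • (R0.comp A₁)).comp ((↑hUnit2.unit⁻¹ : H →L[ℂ] H).comp R0) = R0 := by
      rw [← ContinuousLinearMap.comp_assoc, ← ContinuousLinearMap.mul_def,
        show (((1 : H →L[ℂ] H) + z • (R0.comp A₁)) * ↑hUnit2.unit⁻¹) = 1 from hUnit2.unit.mul_inv, ContinuousLinearMap.one_def,
        ContinuousLinearMap.id_comp]
    exact aux_comp_cancel hUnit2.unit.inv_mul (E2.trans E2'.symm)
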